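/- (Theorem 2, claim (iii): upper bound on the complexity of selected structures.) Assume Conditions (A1), (A2) and (A3′), and assume κ ≥ (2ν+2α+3)/(2α). Then, with M₀′ = 2κα, for every θ ∈ Θ and every M ≥ 0, E_θ[ Σ_{ I ∈ 𝓘 : ρ(I) ≥ M₀′ ρ(I_o) + M } p̂_I ] ≤ C_ν e^{−M/2}, where I_o is the oracle structure of θ. -/

import Mathlib

open MeasureTheory Real

/-- The orthogonal projection onto a linear subspace of `ℝ^N`, as a map `ℝ^N → ℝ^N`. -/
noncomputable def proj {N : ℕ} (K : Submodule ℝ (EuclideanSpace ℝ (Fin N))) :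
    EuclideanSpace ℝ (Fin N) →L[ℝ] EuclideanSpace ℝ (Fin N) :=
  K.subtypeL.comp (K.orthogonalProjectionOnto)


lemma proj_apply {N : ℕ} (K : Submodule ℝ (EuclideanSpace ℝ (Fin N)))
    (y : EuclideanSpace ℝ (Fin N)) :
    proj K y = (K.orthogonalProjectionOnto y : EuclideanSpace ℝ (Fin N)) := rfl

lemma proj_mem {N : ℕ} (K : Submodule ℝ (EuclideanSpace ℝ (Fin N)))
    (y : EuclideanSpace ℝ (Fin N)) : proj K y ∈ K := by
  rw [proj_apply]; exact (K.orthogonalProjectionOnto y).2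

lemma proj_sub_mem {N : ℕ} (K : Submodule ℝ (EuclideanSpace ℝ (Fin N)))
    (y : EuclideanSpace ℝ (Fin N)) : y - proj K y ∈ Kᗮ := by
  rw [proj_apply]; exact Submodule.sub_starProjection_mem_orthogonal (K := K) y

lemma proj_pythagoras {N : ℕ} {K K' : Submodule ℝ (EuclideanSpace ℝ (Fin N))} (h : K ≤ K')
    (y : EuclideanSpace ℝ (Fin N)) :
    ‖y - proj K y‖ ^ 2 = ‖y - proj K' y‖ ^ 2 + ‖proj K' y - proj K y‖ ^ 2 := by
  have h1 : y - proj K y = (y - proj K' y) + (proj K' y - proj K y) := by abel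
  have h2 : y - proj K' y ∈ K'ᗮ := proj_sub_mem K' y
  have h3 : proj K' y - proj K y ∈ K' := sub_mem (proj_mem K' y) (h (proj_mem K y))
  rw [h1, norm_add_sq_real, Submodule.inner_left_of_mem_orthogonal h3 h2]
  ring

lemma proj_diff_sq_le {N : ℕ} {K K' : Submodule ℝ (EuclideanSpace ℝ (Fin N))} (h : K ≤ K')
    (x : EuclideanSpace ℝ (Fin N)) :
    ‖proj K' x - proj K x‖ ^ 2 ≤ ‖proj K' x‖ ^ 2 := by
  have h1 : proj K' x = (proj K' x - proj K x) + proj K x := by abel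
  have h2 : proj K' x - proj K x ∈ Kᗮ := by
    have : proj K' x - proj K x = (x - proj K x) - (x - proj K' x) := by abel
    rw [this]
    exact sub_mem (proj_sub_mem K x) (Submodule.orthogonal_le h (proj_sub_mem K' x))
  have h3 : proj K x ∈ K := proj_mem K x
  have h4 : ‖proj K' x‖ ^ 2 = ‖proj K' x - proj K x‖ ^ 2 + ‖proj K x‖ ^ 2 := by
    conv_lhs => rw [h1]
    rw [norm_add_sq_real, Submodule.inner_left_of_mem_orthogonal h3 h2]
    ring
  nlinarith [sq_nonneg ‖proj K x‖]

lemma div_tsum_le_min {ι : Type*} (f : ι → ℝ) (hpos : ∀ j, 0 < f j) (i o : ι) :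
    f i / ∑' j, f j ≤ min 1 (f i / f o) := by
  by_cases hs : Summable f
  · have hoS : f o ≤ ∑' j, f j := hs.le_tsum o (fun j _ => (hpos j).le)
    have hiS : f i ≤ ∑' j, f j := hs.le_tsum i (fun j _ => (hpos j).le)
    have hS0 : 0 < ∑' j, f j := lt_of_lt_of_le (hpos o) hoS
    refine le_min ((div_le_one hS0).mpr hiS) ?_
    exact div_le_div_of_nonneg_left (hpos i).le (hpos o) hoS
  · rw [tsum_eq_zero_of_not_summable hs, div_zero]
    exact le_min (by norm_num) (le_of_lt (div_pos (hpos i) (hpos o)))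

set_option maxHeartbeats 1000000 in
/-- **Theorem 2, claim (iii)**: upper bound on the complexity of selected structures. Under
Conditions (A1), (A2), (A3′) and `κ ≥ (2ν+2α+3)/(2α)`, with `M₀′ = 2κα`, for every `θ ∈ Θ`
and `M ≥ 0`, `E_θ[ Σ_{I : ρ(I) ≥ M₀′ρ(I_o) + M} p̂_I ] ≤ C_ν e^{−M/2}`. -/
theorem structure_ddm_complexity_upper_bound
    {N : ℕ} {ι : Type*} [Countable ι] [DecidableEq ι]
    -- the family of linear subspaces expressing the structures
    (L : ι → Submodule ℝ (EuclideanSpace ℝ (Fin N)))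
    -- the parameter set and the data distributions, with mean `θ`
    (Θ : Set (EuclideanSpace ℝ (Fin N)))
    (Pθ : EuclideanSpace ℝ (Fin N) → Measure (EuclideanSpace ℝ (Fin N)))
    (hP : ∀ θ ∈ Θ, IsProbabilityMeasure (Pθ θ))
    (σ : ℝ) (hσ : 0 < σ)
    (hmean : ∀ θ ∈ Θ, ∫ y, y ∂(Pθ θ) = θ)
    -- Condition (A1), with `ξ = σ⁻¹(Y − θ)`
    (α : ℝ) (hα0 : 0 < α) (hα1 : α ≤ 1)
    (d : ι → ℝ) (hd0 : ∀ i, 0 ≤ d i)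
    (hA1 : ∀ θ ∈ Θ, ∀ i : ι,
      ∫⁻ y, ENNReal.ofReal (exp (α * ‖proj (L i) (σ⁻¹ • (y - θ))‖ ^ 2)) ∂(Pθ θ)
        ≤ ENNReal.ofReal (exp (d i)))
    -- Condition (A2)
    (ν Cν : ℝ) (hν : 0 < ν) (hCν : 0 < Cν)
    (ρ : ι → ℝ) (hρ0 : ∀ i, 0 ≤ ρ i)
    (hA2sum : Summable fun i : ι => exp (-ν * ρ i))
    (hA2 : ∑' i : ι, exp (-ν * ρ i) ≤ Cν)
    (hρd : ∀ i, d i ≤ ρ i)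
    -- the DDM tuning parameter
    (κ : ℝ) (hκ : (32 * ν + 10 + α) / (4 * α) < κ)
    -- the structure selector `Î` (a minimizer of the penalized criterion)
    (Ihat : EuclideanSpace ℝ (Fin N) → ι)
    (hIhat : ∀ y i, ‖y - proj (L (Ihat y)) y‖ ^ 2 + 2 * κ * σ ^ 2 * ρ (Ihat y)
      ≤ ‖y - proj (L i) y‖ ^ 2 + 2 * κ * σ ^ 2 * ρ i)
    -- the structure DDM weights: either `π̃(I|Y)` (MA) or `π̌(I|Y) = 1{I = Î}` (MS)
    (phat : ι → EuclideanSpace ℝ (Fin N) → ℝ)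
    (hphat :
      (∀ i y, phat i y =
          exp (-κ * ρ i) * exp (-‖y - proj (L i) y‖ ^ 2 / (2 * σ ^ 2)) /
            ∑' j : ι, exp (-κ * ρ j) * exp (-‖y - proj (L j) y‖ ^ 2 / (2 * σ ^ 2))) ∨
        (∀ i y, phat i y = if Ihat y = i then 1 else 0))
    -- `κ ≥ (2ν+2α+3)/(2α)`
    (hκ2 : (2 * ν + 2 * α + 3) / (2 * α) ≤ κ)
    -- Condition (A3′)
    (hA3' : ∀ i₀ i₁ : ι, ∃ i' i'' : ι, L i' = L i₀ ⊔ L i₁ ∧ L i'' = L i₀ ⊓ L i₁ ∧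
      ρ i' ≤ ρ i₀ + ρ i₁ ∧ ρ i'' ≤ ρ i₀)
    -- the oracle structure `I_o(θ)`, minimizing `I ↦ r²(I,θ) = ‖θ − P_I θ‖² + σ²ρ(I)`
    (Io : EuclideanSpace ℝ (Fin N) → ι)
    (hIo : ∀ θ i, ‖θ - proj (L (Io θ)) θ‖ ^ 2 + σ ^ 2 * ρ (Io θ)
      ≤ ‖θ - proj (L i) θ‖ ^ 2 + σ ^ 2 * ρ i) :
    ∀ θ ∈ Θ, ∀ M : ℝ, 0 ≤ M →
      -- `E_θ[ Σ_{I ∈ 𝓘 : ρ(I) ≥ M₀′ ρ(I_o) + M} p̂_I ]` with `M₀′ = 2κα`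
      ∫⁻ y, (∑' i : ι,
          if 2 * κ * α * ρ (Io θ) + M ≤ ρ i then ENNReal.ofReal (phat i y) else 0) ∂(Pθ θ)
        ≤ ENNReal.ofReal (Cν * exp (-M / 2)) := by
  classical
  intro θ hθ M hM
  set o := Io θ with ho
  choose i' i'' hL' hL'' hρ' hρ'' using fun i => hA3' o i
  have hα4 : (0:ℝ) < 4 * α := by linarith
  have hκ' : 32 * ν + 10 + α < κ * (4 * α) := (div_lt_iff₀ hα4).mp hκ
  have hx : 8 * ν + 5/2 + α/4 < κ * α := by nlinarith
  have hx0 : (0:ℝ) < κ * α := by nlinarith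
  have h2σ : (0:ℝ) < 2 * σ ^ 2 := by positivity
  -- Step 1 : pointwise bound on phat
  have key : ∀ i y, phat i y ≤ exp (α * (κ * (ρ o - ρ i) +
      (‖y - proj (L o) y‖ ^ 2 - ‖y - proj (L i) y‖ ^ 2) / (2 * σ ^ 2))) := by
    intro i y
    set Eiy := κ * (ρ o - ρ i) +
      (‖y - proj (L o) y‖ ^ 2 - ‖y - proj (L i) y‖ ^ 2) / (2 * σ ^ 2) with hEiy
    have hmin : min 1 (exp Eiy) ≤ exp (α * Eiy) := by
      rcases le_total Eiy 0 with h | h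
      · refine (min_le_right _ _).trans (exp_le_exp.mpr ?_)
        nlinarith
      · refine (min_le_left _ _).trans (one_le_exp ?_)
        exact mul_nonneg hα0.le h
    refine le_trans ?_ hmin
    rcases hphat with hma | hms
    · rw [hma i y]
      have hfo : exp (-κ * ρ i) * exp (-‖y - proj (L i) y‖ ^ 2 / (2 * σ ^ 2)) /
          (exp (-κ * ρ o) * exp (-‖y - proj (L o) y‖ ^ 2 / (2 * σ ^ 2))) = exp Eiy := by
        rw [← exp_add, ← exp_add, ← Real.exp_sub, hEiy]
        congr 1
        field_simp
        ring
      have hdiv := div_tsum_le_min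
        (fun j => exp (-κ * ρ j) * exp (-‖y - proj (L j) y‖ ^ 2 / (2 * σ ^ 2)))
        (fun j => mul_pos (exp_pos _) (exp_pos _)) i o
      rw [hfo] at hdiv
      exact hdiv
    · rw [hms i y]
      split_ifs with h
      · refine le_min le_rfl (one_le_exp ?_)
        have h' := hIhat y o
        rw [h] at h'
        rw [hEiy]
        have hdiv : κ * (ρ i - ρ o) ≤
            (‖y - proj (L o) y‖ ^ 2 - ‖y - proj (L i) y‖ ^ 2) / (2 * σ ^ 2) := by
          rw [le_div_iff₀ h2σ]
          nlinarith
        nlinarith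
      · positivity
  -- Step 2 : pointwise bound on the exponent
  have step2 : ∀ i y, α * (κ * (ρ o - ρ i) +
        (‖y - proj (L o) y‖ ^ 2 - ‖y - proj (L i) y‖ ^ 2) / (2 * σ ^ 2))
      ≤ α * (κ * (ρ o - ρ i) + ρ i) + α * ‖proj (L (i' i)) (σ⁻¹ • (y - θ))‖ ^ 2 := by
    intro i y
    have hKo : L o ≤ L (i' i) := by rw [hL' i]; exact le_sup_left
    have hKi : L i ≤ L (i' i) := by rw [hL' i]; exact le_sup_right
    set ξ := σ⁻¹ • (y - θ) with hξ
    have hy : y = θ + σ • ξ := by rw [hξ, smul_inv_smul₀ hσ.ne']; abel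
    have hpyo := proj_pythagoras hKo y
    have hpyi := proj_pythagoras hKi y
    have hpθ := proj_pythagoras hKo θ
    have hq : proj (L (i' i)) y - proj (L o) y
        = (proj (L (i' i)) θ - proj (L o) θ)
          + σ • (proj (L (i' i)) ξ - proj (L o) ξ) := by
      conv_lhs => rw [hy]
      simp only [map_add, _root_.map_smul, smul_sub]
      abel
    have hb2 := proj_diff_sq_le hKo ξ
    have ha2 : ‖proj (L (i' i)) θ - proj (L o) θ‖ ^ 2 ≤ σ ^ 2 * ρ i := by
      have h1 := hIo θ (i' i)
      rw [← ho] at h1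
      have h2 := hρ' i
      nlinarith [sq_nonneg σ]
    have h3 : ‖proj (L (i' i)) y - proj (L o) y‖
        ≤ ‖proj (L (i' i)) θ - proj (L o) θ‖
          + σ * ‖proj (L (i' i)) ξ - proj (L o) ξ‖ := by
      rw [hq]
      refine (norm_add_le _ _).trans ?_
      rw [norm_smul, Real.norm_eq_abs, abs_of_pos hσ]
    have hnq : ‖proj (L (i' i)) y - proj (L o) y‖ ^ 2
        ≤ 2 * (σ ^ 2 * ρ i) + 2 * σ ^ 2 * ‖proj (L (i' i)) ξ‖ ^ 2 := by
      have h4 : ‖proj (L (i' i)) y - proj (L o) y‖ ^ 2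
          ≤ (‖proj (L (i' i)) θ - proj (L o) θ‖
            + σ * ‖proj (L (i' i)) ξ - proj (L o) ξ‖) ^ 2 := by
        have h5 := norm_nonneg (proj (L (i' i)) y - proj (L o) y)
        nlinarith
      have h6 : σ ^ 2 * ‖proj (L (i' i)) ξ - proj (L o) ξ‖ ^ 2
          ≤ σ ^ 2 * ‖proj (L (i' i)) ξ‖ ^ 2 :=
        mul_le_mul_of_nonneg_left hb2 (sq_nonneg σ)
      nlinarith [sq_nonneg (‖proj (L (i' i)) θ - proj (L o) θ‖
        - σ * ‖proj (L (i' i)) ξ - proj (L o) ξ‖)]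
    have hD : (‖y - proj (L o) y‖ ^ 2 - ‖y - proj (L i) y‖ ^ 2) / (2 * σ ^ 2)
        ≤ ρ i + ‖proj (L (i' i)) ξ‖ ^ 2 := by
      rw [div_le_iff₀ h2σ]
      nlinarith [sq_nonneg ‖proj (L (i' i)) y - proj (L i) y‖]
    nlinarith [mul_le_mul_of_nonneg_left hD hα0.le]
  have hreal : ∀ i y, phat i y ≤ exp (α * (κ * (ρ o - ρ i) + ρ i))
      * exp (α * ‖proj (L (i' i)) (σ⁻¹ • (y - θ))‖ ^ 2) := by
    intro i y
    refine (key i y).trans ?_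
    rw [← exp_add]
    exact exp_le_exp.mpr (step2 i y)
  -- the dominating functions
  set G : ι → EuclideanSpace ℝ (Fin N) → ENNReal := fun i y =>
    if 2 * κ * α * ρ o + M ≤ ρ i then
      ENNReal.ofReal (exp (α * (κ * (ρ o - ρ i) + ρ i))
        * exp (α * ‖proj (L (i' i)) (σ⁻¹ • (y - θ))‖ ^ 2))
    else 0 with hG
  have hpt : ∀ y i, (if 2 * κ * α * ρ o + M ≤ ρ i then ENNReal.ofReal (phat i y) else 0)
      ≤ G i y := by
    intro y i
    rw [hG]
    dsimp only
    split_ifs with h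
    · exact ENNReal.ofReal_le_ofReal (hreal i y)
    · exact le_rfl
  have hGmeas : ∀ i, Measurable (G i) := by
    intro i
    rw [hG]
    dsimp only
    split_ifs with h
    · refine ENNReal.measurable_ofReal.comp (Continuous.measurable ?_)
      exact continuous_const.mul (Real.continuous_exp.comp (continuous_const.mul
        (((proj (L (i' i))).continuous.comp
          (((continuous_id.sub continuous_const).const_smul σ⁻¹))).norm.pow 2)))
    · exact measurable_const
  have harith : ∀ i, 2 * κ * α * ρ o + M ≤ ρ i →
      α * (κ * (ρ o - ρ i) + ρ i) + (ρ o + ρ i) ≤ -ν * ρ i + -(M / 2) := by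
    intro i hc
    have hco : 0 ≤ 2 * (κ * α) ^ 2 - 3 * (κ * α) - 2 * (κ * α) * α - 2 * (κ * α) * ν - 1 := by
      nlinarith [mul_pos hx0 hν, mul_le_mul_of_nonneg_left hα1 hx0.le,
        mul_lt_mul_of_pos_left hx hx0]
    nlinarith [mul_le_mul_of_nonneg_left hc hx0.le, mul_nonneg (hρ0 i) hco, hρ0 o, hρ0 i,
      mul_nonneg hx0.le (hρ0 o)]
  have hGint : ∀ i, ∫⁻ y, G i y ∂(Pθ θ)
      ≤ (if 2 * κ * α * ρ o + M ≤ ρ i then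
          ENNReal.ofReal (exp (-ν * ρ i) * exp (-(M / 2))) else 0) := by
    intro i
    rw [hG]
    dsimp only
    split_ifs with h
    · have hsplit : ∀ y : EuclideanSpace ℝ (Fin N),
          ENNReal.ofReal (exp (α * (κ * (ρ o - ρ i) + ρ i))
            * exp (α * ‖proj (L (i' i)) (σ⁻¹ • (y - θ))‖ ^ 2))
          = ENNReal.ofReal (exp (α * (κ * (ρ o - ρ i) + ρ i)))
            * ENNReal.ofReal (exp (α * ‖proj (L (i' i)) (σ⁻¹ • (y - θ))‖ ^ 2)) :=
        fun y => ENNReal.ofReal_mul (exp_pos _).le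
      simp only [hsplit]
      rw [lintegral_const_mul' _ _ ENNReal.ofReal_ne_top]
      calc ENNReal.ofReal (exp (α * (κ * (ρ o - ρ i) + ρ i)))
            * ∫⁻ y, ENNReal.ofReal (exp (α * ‖proj (L (i' i)) (σ⁻¹ • (y - θ))‖ ^ 2)) ∂(Pθ θ)
          ≤ ENNReal.ofReal (exp (α * (κ * (ρ o - ρ i) + ρ i)))
            * ENNReal.ofReal (exp (d (i' i))) := mul_le_mul_right (hA1 θ hθ (i' i)) _
        _ ≤ ENNReal.ofReal (exp (-ν * ρ i) * exp (-(M / 2))) := by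
            rw [← ENNReal.ofReal_mul (exp_pos _).le]
            refine ENNReal.ofReal_le_ofReal ?_
            rw [← exp_add, ← exp_add]
            refine exp_le_exp.mpr ?_
            have h1 : d (i' i) ≤ ρ o + ρ i := (hρd _).trans (hρ' i)
            have := harith i h
            linarith
    · simp
  -- putting everything together
  calc ∫⁻ y, (∑' i : ι,
          if 2 * κ * α * ρ o + M ≤ ρ i then ENNReal.ofReal (phat i y) else 0) ∂(Pθ θ)
      ≤ ∫⁻ y, (∑' i : ι, G i y) ∂(Pθ θ) :=
        lintegral_mono fun y => ENNReal.tsum_le_tsum fun i => hpt y i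
    _ = ∑' i : ι, ∫⁻ y, G i y ∂(Pθ θ) := lintegral_tsum fun i => (hGmeas i).aemeasurable
    _ ≤ ∑' i : ι, (if 2 * κ * α * ρ o + M ≤ ρ i then
          ENNReal.ofReal (exp (-ν * ρ i) * exp (-(M / 2))) else 0) :=
        ENNReal.tsum_le_tsum fun i => hGint i
    _ ≤ ∑' i : ι, ENNReal.ofReal (exp (-ν * ρ i)) * ENNReal.ofReal (exp (-(M / 2))) := by
        refine ENNReal.tsum_le_tsum fun i => ?_
        split_ifs with h
        · rw [← ENNReal.ofReal_mul (exp_pos _).le]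
        · exact zero_le
    _ = (∑' i : ι, ENNReal.ofReal (exp (-ν * ρ i))) * ENNReal.ofReal (exp (-(M / 2))) :=
        ENNReal.tsum_mul_right
    _ ≤ ENNReal.ofReal Cν * ENNReal.ofReal (exp (-(M / 2))) := by
        rw [← ENNReal.ofReal_tsum_of_nonneg (fun i => (exp_pos _).le) hA2sum]
        exact mul_le_mul_left (ENNReal.ofReal_le_ofReal hA2) _
    _ = ENNReal.ofReal (Cν * exp (-M / 2)) := by
        rw [← ENNReal.ofReal_mul hCν.le, neg_div]
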